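/- Let n ≥ 1, let Σ be a positive definite n×n real matrix, and let h ≥ 0. Then ∫_{ℝⁿ} max(h − (1/2) xᵀΣ⁻¹x, 0) dx = (√((2π)ⁿ det Σ) / Γ(n/2 + 2)) · h^{n/2 + 1}, where Γ is the Gamma function. -/

import Mathlib

open Real Matrix MeasureTheory Set Metric

private lemma aux_sqrt_pow (x : ℝ) (hx : 0 ≤ x) (n : ℕ) :
    Real.sqrt (x ^ n) = Real.sqrt x ^ n := by
  induction n with
  | zero => simp
  | succ m ih => rw [pow_succ, pow_succ, Real.sqrt_mul (pow_nonneg hx m), ih]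

/-- Volume under the truncated paraboloid:
`∫_{ℝⁿ} [h − (1/2) xᵀ Σ⁻¹ x]₊ dx = (√((2π)ⁿ det Σ) / Γ(n/2 + 2)) · h^(n/2 + 1)`. -/
theorem stmt_10 (n : ℕ) (hn : 1 ≤ n) (C : Matrix (Fin n) (Fin n) ℝ) (hC : C.PosDef)
    (h : ℝ) (hh : 0 ≤ h) :
    (∫ x : Fin n → ℝ, max (h - (1 / 2) * (x ⬝ᵥ C⁻¹.mulVec x)) 0) =
      Real.sqrt ((2 * Real.pi) ^ n * C.det) / Real.Gamma ((n : ℝ) / 2 + 2) *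
        h ^ ((n : ℝ) / 2 + 1) := by
  have hq0 : ∀ x : Fin n → ℝ, 0 ≤ x ⬝ᵥ C⁻¹.mulVec x := by
    intro x
    simpa using hC.inv.posSemidef.dotProduct_mulVec_nonneg x
  rcases eq_or_lt_of_le hh with rfl | hh0
  · -- h = 0 case
    have : (∫ x : Fin n → ℝ, max (0 - (1 / 2) * (x ⬝ᵥ C⁻¹.mulVec x)) 0) = 0 := by
      have : ∀ x : Fin n → ℝ, max (0 - (1 / 2) * (x ⬝ᵥ C⁻¹.mulVec x)) 0 = 0 := by
        intro x
        rw [max_eq_right]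
        nlinarith [hq0 x]
      rw [integral_congr_ae (Filter.Eventually.of_forall this), integral_zero]
    rw [this, Real.zero_rpow (by positivity), mul_zero]
  -- main case: 0 < h
  set S := (open scoped MatrixOrder in CFC.sqrt C) with hSdef
  have hS : S.PosSemidef := (open scoped MatrixOrder in (CFC.sqrt_nonneg C).posSemidef)
  have hSS : S * S = C := (open scoped MatrixOrder in CFC.sqrt_mul_sqrt_self C hC.posSemidef.nonneg)
  have hdetSS : S.det * S.det = C.det := by rw [← det_mul, hSS]
  have hdetS0 : 0 ≤ S.det := by
    rw [hS.1.det_eq_prod_eigenvalues]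
    exact Finset.prod_nonneg fun i _ => hS.eigenvalues_nonneg i
  have hdetS : S.det = Real.sqrt C.det := by
    rw [← hdetSS, Real.sqrt_mul_self hdetS0]
  have hdetne : S.det ≠ 0 := by
    intro h0; have := hC.det_pos; rw [← hdetSS, h0, mul_zero] at this; exact lt_irrefl _ this
  have hunit : IsUnit S.det := isUnit_iff_ne_zero.2 hdetne
  have hSt : Sᵀ = S := by
    rw [← Matrix.conjTranspose_eq_transpose_of_trivial]; exact hS.1
  have hid : S * (C⁻¹ * S) = 1 := by
    rw [← hSS, Matrix.mul_inv_rev, ← Matrix.mul_assoc, ← Matrix.mul_assoc,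
      Matrix.mul_nonsing_inv _ hunit, Matrix.one_mul, Matrix.nonsing_inv_mul _ hunit]
  have hquad : ∀ y : Fin n → ℝ, (S.mulVec y) ⬝ᵥ C⁻¹.mulVec (S.mulVec y) = y ⬝ᵥ y := by
    intro y
    rw [Matrix.mulVec_mulVec]
    nth_rewrite 1 [← hSt]
    rw [Matrix.mulVec_transpose, Matrix.dotProduct_mulVec, Matrix.vecMul_vecMul, hid,
      ← Matrix.dotProduct_mulVec, Matrix.one_mulVec]
  -- step 1: change of variables x = S y
  have hfc : Continuous fun x : Fin n → ℝ => max (h - (1 / 2) * (x ⬝ᵥ C⁻¹.mulVec x)) 0 := by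
    apply Continuous.max _ continuous_const
    apply Continuous.sub continuous_const
    apply Continuous.mul continuous_const
    simp only [dotProduct, Matrix.mulVec]
    fun_prop
  have step1 : (∫ x : Fin n → ℝ, max (h - (1 / 2) * (x ⬝ᵥ C⁻¹.mulVec x)) 0)
      = |S.det| * ∫ y : Fin n → ℝ, max (h - (1 / 2) * (y ⬝ᵥ y)) 0 := by
    have hmap := Real.map_matrix_volume_pi_eq_smul_volume_pi (M := S) hdetne
    have hvol : (volume : Measure (Fin n → ℝ))
        = ENNReal.ofReal |S.det| • Measure.map (Matrix.toLin' S) volume := by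
      rw [hmap, smul_smul, ← ENNReal.ofReal_mul (abs_nonneg _), ← abs_mul,
        mul_inv_cancel₀ hdetne, abs_one, ENNReal.ofReal_one, one_smul]
    calc (∫ x : Fin n → ℝ, max (h - (1 / 2) * (x ⬝ᵥ C⁻¹.mulVec x)) 0)
        = ∫ x, max (h - (1 / 2) * (x ⬝ᵥ C⁻¹.mulVec x)) 0
            ∂(ENNReal.ofReal |S.det| • Measure.map (Matrix.toLin' S) volume) := by
          rw [← hvol]
      _ = |S.det| * ∫ x, max (h - (1 / 2) * (x ⬝ᵥ C⁻¹.mulVec x)) 0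
            ∂(Measure.map (Matrix.toLin' S) volume) := by
          rw [integral_smul_measure, ENNReal.toReal_ofReal (abs_nonneg _), smul_eq_mul]
      _ = |S.det| * ∫ y : Fin n → ℝ, max (h - (1 / 2) * (y ⬝ᵥ y)) 0 := by
          rw [integral_map (Continuous.aemeasurable (by fun_prop)) hfc.aestronglyMeasurable]
          congr 1
          apply integral_congr_ae
          filter_upwards with y
          rw [Matrix.toLin'_apply, hquad]
  -- step 2: to Euclidean space
  have step2 : (∫ y : Fin n → ℝ, max (h - (1 / 2) * (y ⬝ᵥ y)) 0)
      = ∫ z : EuclideanSpace ℝ (Fin n), max (h - (1 / 2) * ‖z‖ ^ 2) 0 := by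
    rw [← (EuclideanSpace.volume_preserving_symm_measurableEquiv_toLp (Fin n)).integral_comp'
      (f := (MeasurableEquiv.toLp 2 (Fin n → ℝ)).symm)
      (fun y => max (h - (1 / 2) * (y ⬝ᵥ y)) 0)]
    congr 1
    ext z
    congr 3
    rw [EuclideanSpace.norm_eq, Real.sq_sqrt (by positivity)]
    simp [dotProduct, MeasurableEquiv.coe_toLp, sq]
  -- step 3: polar coordinates
  haveI : NeZero n := ⟨by omega⟩
  have step3 : (∫ z : EuclideanSpace ℝ (Fin n), max (h - (1 / 2) * ‖z‖ ^ 2) 0)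
      = n * ((Real.sqrt π) ^ n / Real.Gamma ((n:ℝ) / 2 + 1)) *
          ∫ y in Ioi (0:ℝ), y ^ (n - 1) * max (h - (1 / 2) * y ^ 2) 0 := by
    rw [MeasureTheory.integral_fun_norm_addHaar (volume : Measure (EuclideanSpace ℝ (Fin n)))
      (fun r => max (h - (1 / 2) * r ^ 2) 0)]
    have hd : Module.finrank ℝ (EuclideanSpace ℝ (Fin n)) = n := finrank_euclideanSpace_fin
    rw [hd]
    have hb : (volume (ball (0 : EuclideanSpace ℝ (Fin n)) 1)).toReal
        = (Real.sqrt π) ^ n / Real.Gamma ((n:ℝ) / 2 + 1) := by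
      rw [EuclideanSpace.volume_ball]
      have hg : (0:ℝ) ≤ (Real.sqrt π) ^ n / Real.Gamma ((n:ℝ) / 2 + 1) :=
        div_nonneg (pow_nonneg (Real.sqrt_nonneg _) _)
          (Real.Gamma_pos_of_pos (by positivity)).le
      simp only [Fintype.card_fin, ENNReal.ofReal_one, one_pow, one_mul]
      exact ENNReal.toReal_ofReal hg
    rw [measureReal_def, hb]
    simp only [smul_eq_mul, nsmul_eq_mul, mul_assoc]
  -- step 4: compute the 1D integral
  set b := Real.sqrt (2 * h) with hbdef
  have hb0 : 0 < b := Real.sqrt_pos.2 (by linarith)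
  have hb2 : b ^ 2 = 2 * h := Real.sq_sqrt (by linarith)
  have step4 : (∫ y in Ioi (0:ℝ), y ^ (n - 1) * max (h - (1 / 2) * y ^ 2) 0)
      = h * b ^ n / n - b ^ (n + 2) / (2 * (n + 2)) := by
    have heq : ∀ y ∈ Ioi (0:ℝ), y ^ (n-1) * max (h - 1/2 * y^2) 0
        = Set.indicator (Ioc (0:ℝ) b) (fun y => y ^ (n-1) * (h - 1/2 * y^2)) y := by
      intro y hy
      rcases le_or_gt y b with hyb | hyb
      · rw [Set.indicator_of_mem (show y ∈ Ioc (0:ℝ) b from ⟨hy, hyb⟩)]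
        congr 1
        rw [max_eq_left]
        nlinarith [sq_nonneg y, pow_le_pow_left₀ (le_of_lt hy) hyb 2]
      · rw [Set.indicator_of_notMem (fun hmem => absurd hmem.2 (not_le.2 hyb))]
        rw [max_eq_right, mul_zero]
        nlinarith [pow_lt_pow_left₀ hyb hb0.le (n := 2) (by norm_num)]
    rw [setIntegral_congr_fun measurableSet_Ioi heq]
    rw [integral_indicator measurableSet_Ioc, Measure.restrict_restrict measurableSet_Ioc]
    have hIoc : Ioc (0:ℝ) b ∩ Ioi 0 = Ioc 0 b := by
      ext y; constructor
      · rintro ⟨h1, _⟩; exact h1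
      · intro h1; exact ⟨h1, h1.1⟩
    rw [hIoc, ← intervalIntegral.integral_of_le hb0.le]
    have hint1 : IntervalIntegrable (fun y : ℝ => h * y ^ (n-1)) volume 0 b := by
      apply Continuous.intervalIntegrable; fun_prop
    have hint2 : IntervalIntegrable (fun y : ℝ => 1/2 * y ^ (n+1)) volume 0 b := by
      apply Continuous.intervalIntegrable; fun_prop
    have hfun : (fun y : ℝ => y ^ (n-1) * (h - 1/2 * y^2))
        = fun y : ℝ => h * y ^ (n-1) - 1/2 * y ^ (n+1) := by
      ext y
      have : y ^ (n+1) = y ^ (n-1) * y ^ 2 := by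
        rw [← pow_add]; congr 1; omega
      rw [this]; ring
    rw [hfun, intervalIntegral.integral_sub hint1 hint2,
      intervalIntegral.integral_const_mul, intervalIntegral.integral_const_mul,
      integral_pow, integral_pow]
    have h1 : n - 1 + 1 = n := by omega
    rw [h1]
    push_cast [h1]
    rw [Nat.cast_sub hn, Nat.cast_one]
    simp only [zero_pow (by omega : n ≠ 0), zero_pow (by omega : n + 2 ≠ 0), sub_zero, sub_add_cancel]
    have hn0 : (n:ℝ) ≠ 0 := by positivity
    field_simp
    ring
  rw [step1, step2, step3, step4]
  -- final arithmetic
  have hG : 0 < Real.Gamma ((n:ℝ) / 2 + 1) := Real.Gamma_pos_of_pos (by positivity)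
  have hGamma2 : Real.Gamma ((n:ℝ) / 2 + 2) = ((n:ℝ)/2 + 1) * Real.Gamma ((n:ℝ) / 2 + 1) := by
    have : (n:ℝ) / 2 + 2 = ((n:ℝ)/2 + 1) + 1 := by ring
    rw [this, Real.Gamma_add_one (by positivity)]
  have habs : |S.det| = Real.sqrt C.det := by rw [abs_of_nonneg hdetS0, hdetS]
  have hsplit : Real.sqrt ((2 * π) ^ n * C.det)
      = Real.sqrt 2 ^ n * Real.sqrt π ^ n * Real.sqrt C.det := by
    rw [Real.sqrt_mul (by positivity), aux_sqrt_pow _ (by positivity),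
      Real.sqrt_mul (by norm_num : (0:ℝ) ≤ 2), mul_pow]
  have hbsplit : b = Real.sqrt 2 * Real.sqrt h := by
    rw [hbdef, Real.sqrt_mul (by norm_num)]
  have hrpow : h ^ ((n:ℝ) / 2 + 1) = Real.sqrt h ^ n * h := by
    rw [Real.rpow_add hh0, Real.rpow_one]
    congr 1
    rw [show ((n:ℝ)/2 : ℝ) = (1/2 : ℝ) * (n:ℝ) by ring, Real.rpow_mul hh,
      ← Real.sqrt_eq_rpow, Real.rpow_natCast]
  rw [habs, hsplit, hbsplit, hrpow, hGamma2]
  have hn0 : (n:ℝ) ≠ 0 := by positivity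
  have hG' : Real.Gamma ((n:ℝ) / 2 + 1) ≠ 0 := hG.ne'
  have hb2' : (Real.sqrt 2 * Real.sqrt h) ^ (n + 2) = (Real.sqrt 2 * Real.sqrt h) ^ n * (2 * h) := by
    rw [pow_add]
    congr 1
    rw [mul_pow, Real.sq_sqrt (by norm_num : (0:ℝ) ≤ 2), Real.sq_sqrt hh]
  rw [hb2']
  rw [mul_pow]
  field_simp
  ring
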